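/- Let F ∈ C²[0,∞) satisfy F(0) = 1/2, F'(x) ≤ 0, F''(x) ≥ 0, and x²F''(x) + 2xF'(x) - 2F(x) + 1 ≥ 0 for all x > 0. Then the limit of F(x)/x as x → ∞ exists (and is finite); moreover it equals l/3, where l = lim_{x→∞} (F'(x) + (2F(x)-1)/x). -/

import Mathlib

theorem stmt_4 (F : ℝ → ℝ) (hF : ContDiff ℝ 2 F) (h0 : F 0 = 1/2)
    (hF' : ∀ x ≥ (0:ℝ), deriv F x ≤ 0)
    (hF'' : ∀ x ≥ (0:ℝ), deriv (deriv F) x ≥ 0)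
    (hsec : ∀ x > (0:ℝ),
      x^2 * deriv (deriv F) x + 2*x*deriv F x - 2*F x + 1 ≥ 0) :
    ∃ l : ℝ, Filter.Tendsto (fun x => deriv F x + (2*F x - 1)/x)
        Filter.atTop (nhds l) ∧
      Filter.Tendsto (fun x => F x / x) Filter.atTop (nhds (l/3)) := by
  have hFd : Differentiable ℝ F := hF.differentiable (by norm_num)
  have hF'c : Continuous (deriv F) := hF.continuous_deriv (by norm_num)
  have hdF : Differentiable ℝ (deriv F) := by
    have : ContDiff ℝ (1+1) F := by norm_num; exact hF
    exact (contDiff_succ_iff_deriv.mp this).2.2.differentiable (by norm_num)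
  -- deriv F is monotone on Ici 0
  have hmono : MonotoneOn (deriv F) (Set.Ici (0:ℝ)) := by
    apply monotoneOn_of_deriv_nonneg (convex_Ici 0) hF'c.continuousOn
      (hdF.differentiableOn)
    intro x hx
    rw [interior_Ici] at hx
    exact hF'' x (le_of_lt hx)
  -- sup of deriv F on Ici 0
  set S : Set ℝ := deriv F '' Set.Ici 0 with hS
  have hne : S.Nonempty := ⟨deriv F 0, 0, Set.self_mem_Ici, rfl⟩
  have hbdd : BddAbove S := ⟨0, by rintro y ⟨x, hx, rfl⟩; exact hF' x hx⟩
  set m : ℝ := sSup S with hm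
  have hle : ∀ x ≥ (0:ℝ), deriv F x ≤ m := fun x hx => le_csSup hbdd ⟨x, hx, rfl⟩
  -- deriv F tends to m
  have htend' : Filter.Tendsto (deriv F) Filter.atTop (nhds m) := by
    rw [tendsto_order]
    constructor
    · intro a ha
      obtain ⟨y, ⟨x₀, hx₀, rfl⟩, hy⟩ := exists_lt_of_lt_csSup hne ha
      filter_upwards [Filter.eventually_ge_atTop x₀] with x hx
      exact lt_of_lt_of_le hy (hmono hx₀ (le_trans hx₀ hx) hx)
    · intro a ha
      filter_upwards [Filter.eventually_ge_atTop 0] with x hx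
      exact lt_of_le_of_lt (hle x hx) ha
  -- F x ≤ F 0 + m * x for x ≥ 0
  have hupper : ∀ x ≥ (0:ℝ), F x ≤ F 0 + m * x := by
    intro x hx
    have hmon2 : MonotoneOn (fun x => m * x - F x) (Set.Ici (0:ℝ)) := by
      apply monotoneOn_of_deriv_nonneg (convex_Ici 0)
        (((continuous_const.mul continuous_id).sub hFd.continuous).continuousOn)
        (((differentiable_id.const_mul m).sub hFd).differentiableOn)
      intro t ht
      rw [interior_Ici] at ht
      have : deriv (fun x => m * x - F x) t = m - deriv F t := by
        have h1 : HasDerivAt (fun x => m * x - F x) (m * 1 - deriv F t) t :=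
          ((hasDerivAt_id t).const_mul m).sub (hFd t).hasDerivAt
        simpa using h1.deriv
      show 0 ≤ deriv (fun x => m * x - F x) t
      rw [this]
      linarith [hle t (le_of_lt ht)]
    have := hmon2 (Set.self_mem_Ici) hx hx
    simp only [mul_zero, zero_sub] at this
    linarith
  -- F x / x tends to m
  have htendF : Filter.Tendsto (fun x => F x / x) Filter.atTop (nhds m) := by
    rw [tendsto_order]
    constructor
    · intro a ha
      obtain ⟨y, ⟨x₀, hx₀, rfl⟩, hy⟩ := exists_lt_of_lt_csSup hne ha
      set c := deriv F x₀ with hc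
      -- F x ≥ F x₀ + c * (x - x₀) for x ≥ x₀
      have hlow : ∀ x ≥ x₀, F x₀ + c * (x - x₀) ≤ F x := by
        intro x hx
        have hmon3 : MonotoneOn (fun x => F x - c * x) (Set.Ici x₀) := by
          apply monotoneOn_of_deriv_nonneg (convex_Ici x₀)
            ((hFd.continuous.sub (continuous_const.mul continuous_id)).continuousOn)
            ((hFd.sub (differentiable_id.const_mul c)).differentiableOn)
          intro t ht
          rw [interior_Ici] at ht
          have : deriv (fun x => F x - c * x) t = deriv F t - c := by
            have h1 : HasDerivAt (fun x => F x - c * x) (deriv F t - c * 1) t :=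
              (hFd t).hasDerivAt.sub ((hasDerivAt_id t).const_mul c)
            simpa using h1.deriv
          show 0 ≤ deriv (fun x => F x - c * x) t
          rw [this, sub_nonneg]
          exact hmono hx₀ (Set.mem_Ici.mpr (le_trans (Set.mem_Ici.mp hx₀) (le_of_lt (Set.mem_Ioi.mp ht)))) (le_of_lt ht)
        have := hmon3 (Set.self_mem_Ici) hx hx
        simp only [] at this
        linarith [this]
      have hcl : Filter.Tendsto (fun x : ℝ => (F x₀ - c * x₀) / x + c)
          Filter.atTop (nhds c) := by
        have := (tendsto_const_nhds.div_atTop (f := fun x : ℝ => F x₀ - c * x₀)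
          Filter.tendsto_id).add (tendsto_const_nhds (x := c))
        simpa using this
      filter_upwards [hcl.eventually_const_lt hy, Filter.eventually_ge_atTop x₀,
        Filter.eventually_gt_atTop 0] with x h1 h2 h3
      have := hlow x h2
      calc a < (F x₀ - c * x₀) / x + c := h1
        _ = (F x₀ + c * (x - x₀)) / x := by field_simp; ring
        _ ≤ F x / x := by gcongr
    · intro a ha
      have hcl : Filter.Tendsto (fun x : ℝ => F 0 / x + m) Filter.atTop (nhds m) := by
        have := (tendsto_const_nhds.div_atTop (f := fun x : ℝ => F 0)
          Filter.tendsto_id).add (tendsto_const_nhds (x := m))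
        simpa using this
      filter_upwards [hcl.eventually_lt_const ha, Filter.eventually_gt_atTop 0]
        with x h1 h2
      have := hupper x (le_of_lt h2)
      calc F x / x ≤ (F 0 + m * x) / x := by gcongr
        _ = F 0 / x + m := by field_simp
        _ < a := h1
  refine ⟨3 * m, ?_, ?_⟩
  · have h1 : Filter.Tendsto (fun x : ℝ => 1 / x) Filter.atTop (nhds 0) := by
      simpa using tendsto_const_nhds.div_atTop (f := fun _ : ℝ => (1:ℝ)) Filter.tendsto_id
    have h2 : Filter.Tendsto (fun x => deriv F x + (2 * (F x / x) - 1 / x))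
        Filter.atTop (nhds (m + (2 * m - 0))) :=
      htend'.add ((htendF.const_mul 2).sub h1)
    have h3 : (m + (2 * m - 0)) = 3 * m := by ring
    rw [h3] at h2
    apply h2.congr'
    filter_upwards [Filter.eventually_gt_atTop 0] with x hx
    have hx' : x ≠ 0 := ne_of_gt hx
    field_simp
  · have : (3:ℝ) * m / 3 = m := by ring
    rw [this]
    exact htendF
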